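/- (Lemma 2, solution-space characterization) Fix N ≥ 2 and subsets E, A ⊆ P. If the kernel of the extended linear map T_{E,A} has dimension |E ∩ A|, then that kernel is exactly the set of triples (0, v, v) where v : P → ℝ is supported on E ∩ A. -/

import Mathlib

abbrev Pair (N : ℕ) := {p : Fin N × Fin N // p.2 < p.1}

def Dmap {N : ℕ} (δ : Fin N → ℝ) : Pair N → ℝ := fun p => δ p.1.1 - δ p.1.2

def ind {N : ℕ} (a : Pair N) : Pair N → ℝ := fun p => if p = a then 1 else 0

def IsSolution {N : ℕ} (hN : 0 < N) (E : Set (Pair N)) (b : Pair N → ℝ)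
    (dh : Fin N → ℝ) (eh : Pair N → ℝ) : Prop :=
  dh ⟨0, hN⟩ = 0 ∧ (∀ p ∉ E, eh p = 0) ∧ ∀ p, Dmap dh p + eh p = b p

/-- The ambient linear map `(dh, eh, e') ↦ D dh + eh - e'`. -/
def Lfull (N : ℕ) : ((Fin N → ℝ) × (Pair N → ℝ) × (Pair N → ℝ)) →ₗ[ℝ] (Pair N → ℝ) where
  toFun x := fun p => (x.1 p.1.1 - x.1 p.1.2) + x.2.1 p - x.2.2 p
  map_add' x y := by funext p; simp; ring
  map_smul' c x := by funext p; simp; ring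

/-- The domain of the extended (re-vectorized) map: triples `(dh, eh, e')` with
`dh 0 = 0`, `eh` supported on `E`, `e'` supported on `A`. -/
noncomputable def Dom {N : ℕ} (hN : 0 < N) (E A : Set (Pair N)) :
    Submodule ℝ ((Fin N → ℝ) × (Pair N → ℝ) × (Pair N → ℝ)) where
  carrier := {x | x.1 ⟨0, hN⟩ = 0 ∧ (∀ p ∉ E, x.2.1 p = 0) ∧ (∀ p ∉ A, x.2.2 p = 0)}
  add_mem' := by
    rintro a b ⟨ha0, ha1, ha2⟩ ⟨hb0, hb1, hb2⟩
    refine ⟨by simp [ha0, hb0], fun p hp => by simp [ha1 p hp, hb1 p hp],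
      fun p hp => by simp [ha2 p hp, hb2 p hp]⟩
  zero_mem' := ⟨rfl, fun p _ => rfl, fun p _ => rfl⟩
  smul_mem' := by
    rintro c a ⟨ha0, ha1, ha2⟩
    refine ⟨by simp [ha0], fun p hp => by simp [ha1 p hp], fun p hp => by simp [ha2 p hp]⟩

/-- The extended (re-vectorized) linear map `T_{E,A} (dh, eh, e') = D dh + eh - e'`. -/
noncomputable def Tmap {N : ℕ} (hN : 0 < N) (E A : Set (Pair N)) :
    Dom hN E A →ₗ[ℝ] (Pair N → ℝ) := (Lfull N).comp (Dom hN E A).subtype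

/-- Lemma 2 (solution-space characterization): if the kernel of the extended linear map
`T_{E,A}` has dimension `|E ∩ A|`, then that kernel is exactly the set of triples
`(0, v, v)` where `v` is supported on `E ∩ A`. -/
theorem stmt_10 {N : ℕ} (hN : 2 ≤ N) (E A : Set (Pair N))
    (hker : Module.finrank ℝ
        (LinearMap.ker (Tmap (show 0 < N by omega) E A)) = (E ∩ A).ncard) :
    ∀ x : Dom (show 0 < N by omega) E A,
      x ∈ LinearMap.ker (Tmap (show 0 < N by omega) E A) ↔
        ∃ v : Pair N → ℝ, (∀ p ∉ E ∩ A, v p = 0) ∧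
          (x : (Fin N → ℝ) × (Pair N → ℝ) × (Pair N → ℝ)) = (0, v, v) := by
  classical
  set hN0 : 0 < N := (show 0 < N by omega)
  -- the extension of a function on E ∩ A to Pair N
  set ext : ((E ∩ A : Set (Pair N)) → ℝ) → (Pair N → ℝ) :=
    fun w p => if h : p ∈ E ∩ A then w ⟨p, h⟩ else 0 with hext
  have hmem : ∀ w : (E ∩ A : Set (Pair N)) → ℝ,
      ((0, ext w, ext w) : (Fin N → ℝ) × (Pair N → ℝ) × (Pair N → ℝ)) ∈ Dom hN0 E A := by
    intro w
    refine ⟨rfl, fun p hp => ?_, fun p hp => ?_⟩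
    · exact dif_neg (fun h => hp h.1)
    · exact dif_neg (fun h => hp h.2)
  have hker' : ∀ w : (E ∩ A : Set (Pair N)) → ℝ,
      (⟨(0, ext w, ext w), hmem w⟩ : Dom hN0 E A) ∈ LinearMap.ker (Tmap hN0 E A) := by
    intro w
    rw [LinearMap.mem_ker]
    funext p
    simp [Tmap, Lfull]
  set f : ((E ∩ A : Set (Pair N)) → ℝ) →ₗ[ℝ] (LinearMap.ker (Tmap hN0 E A)) :=
    { toFun := fun w => ⟨⟨(0, ext w, ext w), hmem w⟩, hker' w⟩
      map_add' := by
        intro w w'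
        ext p <;> simp [hext] <;> split <;> simp
      map_smul' := by
        intro c w
        ext p <;> simp [hext] } with hf
  have hinj : Function.Injective f := by
    intro w w' h
    funext q
    have := congrFun (congrArg (fun (z : LinearMap.ker (Tmap hN0 E A)) => ((z : Dom hN0 E A) : (Fin N → ℝ) × (Pair N → ℝ) × (Pair N → ℝ)).2.1) h) q
    simpa [hf, hext, q.2.1, q.2.2] using this
  have hfin : Module.finrank ℝ ((E ∩ A : Set (Pair N)) → ℝ)
      = Module.finrank ℝ (LinearMap.ker (Tmap hN0 E A)) := by
    rw [hker, Module.finrank_pi, Set.ncard_eq_toFinset_card', Set.toFinset_card]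
  have hsurj : Function.Surjective f :=
    (LinearMap.injective_iff_surjective_of_finrank_eq_finrank (K := ℝ) (V := (E ∩ A : Set (Pair N)) → ℝ) (V₂ := LinearMap.ker (Tmap hN0 E A)) hfin (f := f)).mp hinj
  intro x
  constructor
  · intro hx
    obtain ⟨w, hw⟩ := hsurj ⟨x, hx⟩
    refine ⟨ext w, fun p hp => dif_neg hp, ?_⟩
    have := congrArg (fun (z : LinearMap.ker (Tmap hN0 E A)) => ((z : Dom hN0 E A) : (Fin N → ℝ) × (Pair N → ℝ) × (Pair N → ℝ))) hw
    simpa [hf] using this.symm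
  · rintro ⟨v, hv, hx⟩
    rw [LinearMap.mem_ker]
    funext p
    simp [Tmap, Lfull, hx]
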